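/- Let d ≥ 1, let Ω ⊆ ℝ^d be open, let D = (d_{i,j})_{i,j=1}^d : Ω → M_d(ℝ) be continuously differentiable on Ω and pointwise antisymmetric (d_{i,j}(X) = −d_{j,i}(X) for all X ∈ Ω and all i, j), and let u, v : ℝ^d → ℝ be smooth functions whose supports are compact subsets of Ω. Then ∫_Ω D(X)∇u(X) · ∇v(X) dX = − ∫_Ω (div_C D)(X) · ∇u(X) v(X) dX. -/

import Mathlib

open MeasureTheory
open scoped BigOperators

/-- The partial derivative `∂_i f (X)` of a scalar function on `ℝ^d`. -/
noncomputable def partialDeriv {d : ℕ} (i : Fin d)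
    (f : EuclideanSpace ℝ (Fin d) → ℝ) (X : EuclideanSpace ℝ (Fin d)) : ℝ :=
  fderiv ℝ f X (EuclideanSpace.single i 1)

/-- **Integration by parts for antisymmetric matrices, smooth case**
(the `C_c^∞` case of Lemma 4.1 of the paper).  Let `Ω ⊆ ℝ^d` be open, let
`D = (d_{i,j})` be a continuously differentiable, pointwise antisymmetric
matrix-valued function on `Ω`, and let `u, v` be smooth functions on `ℝ^d` whose
supports are compact subsets of `Ω`.  Then
`∫_Ω D∇u · ∇v = − ∫_Ω (div_C D) · ∇u · v`, where
`(div_C D)_j = Σ_i ∂_i d_{i,j}` is the vector of divergences of the columns of `D`. -/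
theorem integration_by_parts_antisymm
    {d : ℕ} (hd : 1 ≤ d)
    (Ω : Set (EuclideanSpace ℝ (Fin d))) (hΩ : IsOpen Ω)
    (D : Fin d → Fin d → EuclideanSpace ℝ (Fin d) → ℝ)
    (hD : ∀ i j, ContDiffOn ℝ 1 (D i j) Ω)
    (hanti : ∀ X ∈ Ω, ∀ i j, D i j X = - D j i X)
    (u v : EuclideanSpace ℝ (Fin d) → ℝ)
    (hu : ContDiff ℝ (⊤ : ℕ∞) u) (hv : ContDiff ℝ (⊤ : ℕ∞) v)
    (hucs : HasCompactSupport u) (husupp : tsupport u ⊆ Ω)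
    (hvcs : HasCompactSupport v) (hvsupp : tsupport v ⊆ Ω) :
    ∫ X in Ω, (∑ i, (∑ j, D i j X * partialDeriv j u X) * partialDeriv i v X)
      = - ∫ X in Ω, (∑ j, (∑ i, partialDeriv i (D i j) X) * partialDeriv j u X) * v X := by
  classical
  set e : Fin d → EuclideanSpace ℝ (Fin d) := fun i => EuclideanSpace.single i 1 with he
  set K : Set (EuclideanSpace ℝ (Fin d)) := tsupport u with hKdef
  have hKc : IsClosed K := isClosed_closure
  have hKco : IsCompact K := hucs
  have hKopen : IsOpen Kᶜ := hKc.isOpen_compl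
  -- derivatives of u and v
  have hfd_u : ContDiff ℝ (⊤ : ℕ∞) (fderiv ℝ u) := hu.fderiv_right (by exact_mod_cast le_top)
  have hud : Differentiable ℝ (fderiv ℝ u) := hfd_u.differentiable (by simp)
  have hpu : ∀ j, ContDiff ℝ (⊤ : ℕ∞) (fun X => fderiv ℝ u X (e j)) := fun j =>
    (ContinuousLinearMap.apply ℝ ℝ (e j)).contDiff.comp hfd_u
  have hfu_zero : ∀ X, X ∉ K → fderiv ℝ u X = 0 := by
    intro X hX
    by_contra h
    exact hX (support_fderiv_subset ℝ (by simpa [Function.mem_support] using h))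
  -- the vector field S
  set S : Fin d → EuclideanSpace ℝ (Fin d) → ℝ :=
    fun i X => ∑ j, D i j X * fderiv ℝ u X (e j) with hS
  have hS_zero : ∀ i X, X ∉ K → S i X = 0 := by
    intro i X hX
    rw [hS]
    exact Finset.sum_eq_zero fun j _ => by rw [hfu_zero X hX]; simp
  have hS_eventually : ∀ i, ∀ X ∉ K, S i =ᶠ[nhds X] (fun _ => (0:ℝ)) := fun i X hX =>
    Filter.eventuallyEq_iff_exists_mem.2 ⟨Kᶜ, hKopen.mem_nhds hX, fun Y hY => hS_zero i Y hY⟩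
  have hDiffAt : ∀ i j (X : EuclideanSpace ℝ (Fin d)), X ∈ Ω → DifferentiableAt ℝ (D i j) X :=
    fun i j X hX => ((hD i j).differentiableOn one_ne_zero).differentiableAt (hΩ.mem_nhds hX)
  have hnotΩ : ∀ (X : EuclideanSpace ℝ (Fin d)), X ∉ Ω → X ∉ K := fun X hX h => hX (husupp h)
  have hS_diff : ∀ i, Differentiable ℝ (S i) := by
    intro i X
    by_cases hX : X ∈ Ω
    · rw [hS]
      exact DifferentiableAt.fun_sum fun j _ =>
        (hDiffAt i j X hX).mul ((hpu j).differentiable (by simp) X)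
    · exact (differentiableAt_const (0:ℝ)).congr_of_eventuallyEq (hS_eventually i X (hnotΩ X hX))
  have hfS_zero : ∀ i X, X ∉ K → fderiv ℝ (S i) X = 0 := by
    intro i X hX
    rw [(hS_eventually i X hX).fderiv_eq]
    exact fderiv_const_apply 0
  have hS_cdo : ∀ i, ContDiffOn ℝ 1 (S i) Ω := by
    intro i
    rw [hS]
    exact ContDiffOn.sum fun j _ => (hD i j).mul (((hpu j).of_le (by exact_mod_cast le_top)).contDiffOn)
  have hfS_cont : ∀ i, Continuous (fderiv ℝ (S i)) := by
    intro i
    rw [continuous_iff_continuousAt]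
    intro X
    by_cases hX : X ∈ Ω
    · exact ((hS_cdo i).continuousOn_fderiv_of_isOpen hΩ le_rfl).continuousAt (hΩ.mem_nhds hX)
    · have hev : fderiv ℝ (S i) =ᶠ[nhds X]
          (fun _ => (0 : EuclideanSpace ℝ (Fin d) →L[ℝ] ℝ)) :=
        Filter.eventuallyEq_iff_exists_mem.2
          ⟨Kᶜ, hKopen.mem_nhds (hnotΩ X hX), fun Y hY => hfS_zero i Y hY⟩
      exact continuousAt_const.congr hev.symm
  -- integrability
  have hInt : ∀ (f : EuclideanSpace ℝ (Fin d) → ℝ), Continuous f → (∀ X, X ∉ K → f X = 0) →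
      Integrable f := fun f hc h0 =>
    hc.integrable_of_hasCompactSupport (HasCompactSupport.intro hKco h0)
  have hvd : Differentiable ℝ v := hv.differentiable (by simp)
  have hpv_cont : ∀ i, Continuous (fun X => fderiv ℝ v X (e i)) := fun i =>
    ((hv.fderiv_right (by exact_mod_cast le_top : ((⊤:ℕ∞) : WithTop ℕ∞) + 1 ≤ ((⊤:ℕ∞) : WithTop ℕ∞))).continuous).clm_apply continuous_const
  have hInt1 : ∀ i, Integrable (fun X => S i X * fderiv ℝ v X (e i)) := fun i =>
    hInt _ ((hS_diff i).continuous.mul (hpv_cont i)) (fun X hX => by rw [hS_zero i X hX, zero_mul])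
  have hInt2 : ∀ i, Integrable (fun X => fderiv ℝ (S i) X (e i) * v X) := fun i =>
    hInt _ (((hfS_cont i).clm_apply continuous_const).mul hv.continuous)
      (fun X hX => by rw [hfS_zero i X hX]; simp)
  have hInt3 : ∀ i, Integrable (fun X => S i X * v X) := fun i =>
    hInt _ ((hS_diff i).continuous.mul hv.continuous) (fun X hX => by rw [hS_zero i X hX, zero_mul])
  -- integration by parts in each direction
  have hIBP : ∀ i, ∫ X, S i X * fderiv ℝ v X (e i) = - ∫ X, fderiv ℝ (S i) X (e i) * v X :=
    fun i => integral_mul_fderiv_eq_neg_fderiv_mul_of_integrable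
      (hInt2 i) (hInt1 i) (hInt3 i) (fun x _ => hS_diff i x) (fun x _ => hvd x)
  -- the key pointwise divergence identity
  have hkey : ∀ X, (∑ i, fderiv ℝ (S i) X (e i))
      = ∑ j, (∑ i, fderiv ℝ (D i j) X (e i)) * fderiv ℝ u X (e j) := by
    intro X
    by_cases hX : X ∈ Ω
    · have hpu_d : ∀ j, DifferentiableAt ℝ (fun Y => fderiv ℝ u Y (e j)) X :=
        fun j => ((hpu j).differentiable (by simp) X)
      have hsecond : ∀ j, fderiv ℝ (fun Y => fderiv ℝ u Y (e j)) X
          = (ContinuousLinearMap.apply ℝ ℝ (e j)).comp (fderiv ℝ (fderiv ℝ u) X) := by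
        intro j
        exact ((ContinuousLinearMap.apply ℝ ℝ (e j)).hasFDerivAt.comp X
          (hud X).hasFDerivAt).fderiv
      have hsymm : ∀ i j, fderiv ℝ (fderiv ℝ u) X (e i) (e j)
          = fderiv ℝ (fderiv ℝ u) X (e j) (e i) := fun i j =>
        second_derivative_symmetric (fun y => (hu.differentiable (by simp) y).hasFDerivAt)
          (hud X).hasFDerivAt _ _
      have hSd : ∀ i, fderiv ℝ (S i) X (e i)
          = ∑ j, (D i j X * fderiv ℝ (fderiv ℝ u) X (e i) (e j)
              + fderiv ℝ u X (e j) * fderiv ℝ (D i j) X (e i)) := by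
        intro i
        rw [hS]
        rw [fderiv_fun_sum (A := fun j Y => D i j Y * fderiv ℝ u Y (e j)) (fun j _ => (hDiffAt i j X hX).mul (hpu_d j))]
        rw [ContinuousLinearMap.sum_apply]
        refine Finset.sum_congr rfl fun j _ => ?_
        rw [fderiv_fun_mul (hDiffAt i j X hX) (hpu_d j), hsecond j]
        simp [mul_comm]
      have hT : (∑ i, ∑ j, D i j X * fderiv ℝ (fderiv ℝ u) X (e i) (e j)) = 0 := by
        have h1 : (∑ i, ∑ j, D i j X * fderiv ℝ (fderiv ℝ u) X (e i) (e j))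
            = -(∑ i, ∑ j, D i j X * fderiv ℝ (fderiv ℝ u) X (e i) (e j)) := by
          conv_lhs => rw [Finset.sum_comm]
          rw [← Finset.sum_neg_distrib]
          refine Finset.sum_congr rfl fun j _ => ?_
          rw [← Finset.sum_neg_distrib]
          refine Finset.sum_congr rfl fun i _ => ?_
          rw [hanti X hX j i, hsymm i j]
          ring
        linarith
      calc (∑ i, fderiv ℝ (S i) X (e i))
          = ∑ i, ∑ j, (D i j X * fderiv ℝ (fderiv ℝ u) X (e i) (e j)
              + fderiv ℝ u X (e j) * fderiv ℝ (D i j) X (e i)) :=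
            Finset.sum_congr rfl fun i _ => hSd i
        _ = (∑ i, ∑ j, D i j X * fderiv ℝ (fderiv ℝ u) X (e i) (e j))
              + ∑ i, ∑ j, fderiv ℝ u X (e j) * fderiv ℝ (D i j) X (e i) := by
            rw [← Finset.sum_add_distrib]
            exact Finset.sum_congr rfl fun i _ => by rw [← Finset.sum_add_distrib]
        _ = ∑ i, ∑ j, fderiv ℝ u X (e j) * fderiv ℝ (D i j) X (e i) := by rw [hT, zero_add]
        _ = ∑ j, (∑ i, fderiv ℝ (D i j) X (e i)) * fderiv ℝ u X (e j) := by
            rw [Finset.sum_comm]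
            refine Finset.sum_congr rfl fun j _ => ?_
            rw [Finset.sum_mul]
            exact Finset.sum_congr rfl fun i _ => mul_comm _ _
    · have hXK : X ∉ K := hnotΩ X hX
      have h1 : ∀ i, fderiv ℝ (S i) X (e i) = 0 := fun i => by rw [hfS_zero i X hXK]; simp
      have h2 : ∀ j, fderiv ℝ u X (e j) = 0 := fun j => by rw [hfu_zero X hXK]; simp
      simp [h1, h2]
  -- assembling
  show ∫ X in Ω, (∑ i, S i X * fderiv ℝ v X (e i))
      = - ∫ X in Ω, (∑ j, (∑ i, fderiv ℝ (D i j) X (e i)) * fderiv ℝ u X (e j)) * v X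
  have lhs_eq : ∫ X in Ω, (∑ i, S i X * fderiv ℝ v X (e i))
      = ∑ i, ∫ X, S i X * fderiv ℝ v X (e i) := by
    rw [setIntegral_eq_integral_of_forall_compl_eq_zero (fun X hX =>
      Finset.sum_eq_zero fun i _ => by rw [hS_zero i X (hnotΩ X hX), zero_mul])]
    exact integral_finset_sum _ fun i _ => hInt1 i
  have rhs_eq : ∫ X in Ω, (∑ j, (∑ i, fderiv ℝ (D i j) X (e i)) * fderiv ℝ u X (e j)) * v X
      = ∑ i, ∫ X, fderiv ℝ (S i) X (e i) * v X := by
    rw [setIntegral_eq_integral_of_forall_compl_eq_zero (fun X hX => by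
      have h2 : ∀ j, fderiv ℝ u X (e j) = 0 := fun j => by
        rw [hfu_zero X (hnotΩ X hX)]; simp
      simp [h2])]
    rw [← integral_finset_sum _ fun i _ => hInt2 i]
    have hptw : ∀ X : EuclideanSpace ℝ (Fin d),
        (∑ j, (∑ i, fderiv ℝ (D i j) X (e i)) * fderiv ℝ u X (e j)) * v X
        = ∑ i, fderiv ℝ (S i) X (e i) * v X := fun X => by
      rw [← hkey X, Finset.sum_mul]
    simp_rw [hptw]
  rw [lhs_eq, rhs_eq]
  rw [← Finset.sum_neg_distrib]
  exact Finset.sum_congr rfl fun i _ => hIBP i
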